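/- Let f : ℝ → ℂ be 2π-periodic and integrable over a period, and let t ∈ ℝ. If ∫_{−π}^{π} |f(t−τ) − f(t)|/|τ| dτ < ∞, then the partial sums of the Fourier series converge at t to f(t): S_n(f)(t) → f(t) as n → ∞. -/

import Mathlib

open Real MeasureTheory Filter

/-- The `n`-th Fourier coefficient of a `2π`-periodic function,
`f̂(n) = (1/2π) ∫_{-π}^{π} f(t) e^{-int} dt`. -/
noncomputable def fourierCoeffT (f : ℝ → ℂ) (n : ℤ) : ℂ :=
  (1 / (2 * π)) • ∫ t in (-π)..π, f t * Complex.exp (-(n : ℂ) * Complex.I * (t : ℂ))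

open Topology in
private lemma aux_sum_zpow (z : ℂ) (hz : z ≠ 0) (n : ℕ) :
    (∑ j ∈ Finset.Icc (-(n:ℤ)) (n:ℤ), z ^ j) * (z - 1)
      = z ^ ((n:ℤ)+1) - z ^ (-(n:ℤ)) := by
  induction n with
  | zero => simp
  | succ n ih =>
    have hset : Finset.Icc (-((n+1:ℕ)):ℤ) ((n+1:ℕ):ℤ)
        = insert (-((n+1:ℕ)):ℤ) (insert ((n+1:ℕ):ℤ) (Finset.Icc (-(n:ℕ):ℤ) (n:ℤ))) := by
      ext x
      simp only [Finset.mem_Icc, Finset.mem_insert]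
      push_cast
      omega
    rw [hset, Finset.sum_insert (by simp only [Finset.mem_insert, Finset.mem_Icc]; push_cast; omega),
      Finset.sum_insert (by simp only [Finset.mem_Icc]; push_cast; omega)]
    push_cast
    rw [add_mul, add_mul, ih]
    have e1 : ∀ m : ℤ, z ^ (m + 1) = z ^ m * z := fun m => zpow_add_one₀ hz m
    have e2 : ∀ m : ℤ, z ^ (-(m+1)) = z ^ (-m) * z⁻¹ := by
      intro m
      rw [neg_add, zpow_add₀ hz]; simp
    have e3 : z⁻¹ * z = 1 := inv_mul_cancel₀ hz
    rw [show ((n:ℤ) + 1 + 1) = ((n:ℤ)+1) + 1 from rfl, e1 ((n:ℤ)+1)]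
    rw [show (-((n:ℤ) + 1)) = -((n:ℤ)+1) from rfl, e2 (n:ℤ), e1 (n:ℤ)]
    field_simp
    ring

private lemma aux_abs_exp_sub_one (τ : ℝ) :
    ‖Complex.exp ((τ:ℂ) * Complex.I) - 1‖ = 2 * |Real.sin (τ/2)| := by
  have h1 : (Complex.exp ((τ:ℂ) * Complex.I) - 1).re = Real.cos τ - 1 := by
    simp [Complex.exp_ofReal_mul_I_re]
  have h2 : (Complex.exp ((τ:ℂ) * Complex.I) - 1).im = Real.sin τ := by
    simp [Complex.exp_ofReal_mul_I_im]
  rw [Complex.norm_def, Complex.normSq_apply, h1, h2]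
  have h4 : (Real.cos τ - 1) * (Real.cos τ - 1) + Real.sin τ * Real.sin τ
      = (2 * |Real.sin (τ/2)|)^2 := by
    have e1 := Real.sin_sq_eq_half_sub (τ/2)
    rw [show 2*(τ/2) = τ by ring] at e1
    have e2 := Real.sin_sq_add_cos_sq τ
    rw [mul_pow, sq_abs]
    nlinarith [e1, e2]
  rw [h4, Real.sqrt_sq (by positivity)]

private lemma aux_lower (τ : ℝ) (hτ : |τ| ≤ π) :
    2 / π * |τ| ≤ ‖Complex.exp ((τ:ℂ) * Complex.I) - 1‖ := by
  rw [aux_abs_exp_sub_one]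
  have h := Real.mul_abs_le_abs_sin (x := τ/2)
    (by rw [abs_div, abs_two]; linarith [abs_nonneg τ])
  rw [abs_div, abs_two] at h
  calc 2 / π * |τ| = 2 * (2 / π * (|τ|/2)) := by ring
    _ ≤ 2 * |Real.sin (τ/2)| := by linarith [h]

open Topology in
private lemma aux_RL (g : ℝ → ℂ) (hg : IntervalIntegrable g volume (-π) π)
    (c : ℕ → ℝ) (hc : Tendsto (fun n => -c n / (2*π)) atTop (cocompact ℝ)) :
    Tendsto (fun n => ∫ τ in (-π)..π, g τ * Complex.exp (((c n * τ : ℝ) : ℂ) * Complex.I))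
      atTop (𝓝 0) := by
  have hππ : -π ≤ π := by linarith [pi_pos]
  set g0 : ℝ → ℂ := (Set.Ioc (-π) π).indicator g with hg0def
  have hg0 : Integrable g0 := by
    refine (IntegrableOn.integrable_indicator ?_ measurableSet_Ioc)
    exact hg.1
  have H := (Real.tendsto_integral_exp_smul_cocompact g0).comp hc
  simp only [Function.comp_def] at H
  convert H using 2 with n
  rw [intervalIntegral.integral_of_le hππ]
  rw [show (fun v : ℝ => (Real.fourierChar (-(v * (-c n / (2*π))))) • g0 v)
      = fun v : ℝ => (Set.Ioc (-π) π).indicator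
          (fun τ => g τ * Complex.exp (((c n * τ : ℝ) : ℂ) * Complex.I)) v from ?_]
  · rw [MeasureTheory.integral_indicator measurableSet_Ioc]
  · funext v
    rw [Circle.smul_def, Real.fourierChar_apply, hg0def]
    by_cases hv : v ∈ Set.Ioc (-π) π
    · rw [Set.indicator_of_mem hv, Set.indicator_of_mem hv]
      have harg : ((2 * π * -(v * (-c n / (2*π))) : ℝ) : ℂ) = ((c n * v : ℝ) : ℂ) := by
        have hπ : (π:ℝ) ≠ 0 := pi_ne_zero
        congr 1
        field_simp
      rw [harg, smul_eq_mul]; ring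
    · rw [Set.indicator_of_notMem hv, Set.indicator_of_notMem hv, smul_zero]

private noncomputable def auxD (n : ℕ) (x : ℝ) : ℂ :=
  ∑ j ∈ Finset.Icc (-(n:ℤ)) (n:ℤ), Complex.exp ((j:ℂ) * Complex.I * (x:ℂ))

private lemma auxD_cont (n : ℕ) : Continuous (auxD n) := by
  apply continuous_finset_sum
  intro j _
  apply Complex.continuous_exp.comp
  fun_prop

private lemma auxD_periodic (n : ℕ) : Function.Periodic (auxD n) (2*π) := by
  intro x
  unfold auxD
  refine Finset.sum_congr rfl fun j _ => ?_
  push_cast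
  rw [show (j:ℂ) * Complex.I * ((x:ℂ) + 2*(π:ℂ)) = (j:ℂ) * Complex.I * (x:ℂ) + (j:ℂ)*(2*(π:ℂ)*Complex.I) by ring,
    Complex.exp_add, Complex.exp_int_mul_two_pi_mul_I, mul_one]

private lemma auxD_integral (n : ℕ) : (∫ τ in (-π)..π, auxD n τ) = ((2*π : ℝ) : ℂ) := by
  unfold auxD
  rw [intervalIntegral.integral_finset_sum]
  · rw [Finset.sum_eq_single 0]
    · simp [intervalIntegral.integral_const]
      ring
    · intro j _ hj
      have hc : ((j:ℂ) * Complex.I) ≠ 0 :=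
        mul_ne_zero (Int.cast_ne_zero.mpr hj) Complex.I_ne_zero
      rw [integral_exp_mul_complex hc]
      rw [show Complex.exp ((j:ℂ) * Complex.I * ((π:ℝ):ℂ)) = Complex.exp ((j:ℂ) * Complex.I * ((-π:ℝ):ℂ)) from ?_]
      · simp
      · rw [Complex.exp_eq_exp_iff_exists_int]
        exact ⟨j, by push_cast; ring⟩
    · intro h
      simp at h
  · intro j _
    apply Continuous.intervalIntegrable
    apply Complex.continuous_exp.comp
    fun_prop

private lemma aux_shift (f : ℝ → ℂ) (hper : Function.Periodic f (2 * π))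
    (hint : IntervalIntegrable f volume (-π) π) (k : ℤ) :
    IntervalIntegrable f volume (-π - 2*π*k) (π - 2*π*k) := by
  have h := hint.comp_add_left (2*π*(k:ℝ))
  have hfun : (fun x => f (2*π*(k:ℝ) + x)) = f := by
    funext x
    rw [show 2*π*(k:ℝ) + x = x + (k:ℝ)*(2*π) by ring]
    exact (hper.int_mul k) x
  rwa [hfun] at h

private lemma aux_window (f : ℝ → ℂ) (hper : Function.Periodic f (2 * π))
    (hint : IntervalIntegrable f volume (-π) π) (t : ℝ) :
    IntervalIntegrable f volume (t - π) (t + π) := by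
  have h2π : (0:ℝ) < 2*π := by linarith [pi_pos]
  set k : ℤ := ⌊t/(2*π)⌋ with hk
  have hk1 : (k:ℝ) ≤ t/(2*π) := Int.floor_le _
  have hk2 : t/(2*π) < (k:ℝ) + 1 := Int.lt_floor_add_one _
  have hb1 : 2*π*(k:ℝ) ≤ t := by
    rw [le_div_iff₀ h2π] at hk1
    linarith
  have hb2 : t ≤ 2*π*((k:ℝ)+1) := by
    rw [div_lt_iff₀ h2π] at hk2
    nlinarith
  have h1 := aux_shift f hper hint (-k)
  have h2 := aux_shift f hper hint (-(k+1))
  rw [show (-π - 2*π*((-k:ℤ):ℝ)) = -π + 2*π*(k:ℝ) by push_cast; ring,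
      show (π - 2*π*((-k:ℤ):ℝ)) = π + 2*π*(k:ℝ) by push_cast; ring] at h1
  rw [show (-π - 2*π*((-(k+1):ℤ):ℝ)) = π + 2*π*(k:ℝ) by push_cast; ring,
      show (π - 2*π*((-(k+1):ℤ):ℝ)) = π + 2*π*((k:ℝ)+1) by push_cast; ring] at h2
  have h12 := h1.trans h2
  refine h12.mono_set ?_
  rw [Set.uIcc_of_le (by linarith), Set.uIcc_of_le (by linarith)]
  apply Set.Icc_subset_Icc <;> linarith

private lemma aux_pointwise (f : ℝ → ℂ) (t : ℝ) (n : ℕ) (τ : ℝ) (hτ0 : τ ≠ 0) (hτabs : |τ| ≤ π) :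
    (f (t - τ) - f t) * auxD n τ
      = ((f (t - τ) - f t) / (Complex.exp ((τ:ℂ) * Complex.I) - 1))
          * Complex.exp (((((n:ℝ)+1) * τ : ℝ) : ℂ) * Complex.I)
        - ((f (t - τ) - f t) / (Complex.exp ((τ:ℂ) * Complex.I) - 1))
          * Complex.exp (((-(n:ℝ) * τ : ℝ) : ℂ) * Complex.I) := by
  set z := Complex.exp ((τ:ℂ) * Complex.I) with hzdef
  have hz0 : z ≠ 0 := Complex.exp_ne_zero _
  have hz1 : z ≠ 1 := by
    intro hz
    rw [hzdef, Complex.exp_eq_one_iff] at hz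
    obtain ⟨m, hm⟩ := hz
    rw [show (m:ℂ) * (2*(π:ℂ)*Complex.I) = ((2*π*(m:ℝ) : ℝ) : ℂ) * Complex.I by push_cast; ring] at hm
    have heq : τ = 2*π*(m:ℝ) := by
      have := mul_right_cancel₀ Complex.I_ne_zero hm
      exact_mod_cast this
    rcases eq_or_ne m 0 with rfl | hm0
    · simp at heq; exact hτ0 heq
    · have : (2*π) ≤ |τ| := by
        rw [heq, abs_mul]
        have h1 : (1:ℝ) ≤ |(m:ℝ)| := by
          rw [show |(m:ℝ)| = ((|m| : ℤ) : ℝ) by push_cast; rfl]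
          exact_mod_cast Int.one_le_abs hm0
        have h2 : |2*π| = 2*π := abs_of_pos (by linarith [pi_pos])
        nlinarith [pi_pos]
      linarith [pi_pos]
  have hzz : z - 1 ≠ 0 := sub_ne_zero.mpr hz1
  have hD : auxD n τ = ∑ j ∈ Finset.Icc (-(n:ℤ)) (n:ℤ), z ^ j := by
    unfold auxD
    refine Finset.sum_congr rfl fun j _ => ?_
    rw [hzdef, ← Complex.exp_int_mul]
    congr 1
    push_cast
    ring
  have hE1 : Complex.exp (((((n:ℝ)+1) * τ : ℝ) : ℂ) * Complex.I) = z ^ ((n:ℤ)+1) := by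
    rw [hzdef, ← Complex.exp_int_mul]
    congr 1
    push_cast
    ring
  have hE2 : Complex.exp (((-(n:ℝ) * τ : ℝ) : ℂ) * Complex.I) = z ^ (-(n:ℤ)) := by
    rw [hzdef, ← Complex.exp_int_mul]
    congr 1
    push_cast
    ring
  have key := aux_sum_zpow z hz0 n
  rw [hD, hE1, hE2, ← mul_sub, ← key]
  rw [div_mul_eq_mul_div, mul_comm (∑ j ∈ Finset.Icc (-(n:ℤ)) (n:ℤ), z ^ j) (z - 1)]
  field_simp

/-- Dini's convergence test: if `∫_{-π}^{π} |f(t−τ) − f(t)|/|τ| dτ < ∞` then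
the Fourier partial sums `S_n(f)(t) = ∑_{j=-n}^{n} f̂(j)e^{ijt}` converge to `f(t)`. -/
theorem stmt_7 (f : ℝ → ℂ) (hper : Function.Periodic f (2 * π))
    (hint : IntervalIntegrable f volume (-π) π) (t : ℝ)
    (hDini : IntervalIntegrable (fun τ => ‖f (t - τ) - f t‖ / |τ|)
      volume (-π) π) :
    Tendsto (fun n : ℕ => ∑ j ∈ Finset.Icc (-(n : ℤ)) (n : ℤ),
        fourierCoeffT f j * Complex.exp ((j : ℂ) * Complex.I * (t : ℂ)))
      atTop (nhds (f t)) := by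
  have hπ : (0:ℝ) < π := pi_pos
  have hππ : -π ≤ π := by linarith
  set G : ℝ → ℂ := fun τ => (f (t - τ) - f t) / (Complex.exp ((τ:ℂ) * Complex.I) - 1)
    with hG_def
  -- integrability of τ ↦ f (t - τ)
  have hfc : IntervalIntegrable (fun τ => f (t - τ)) volume (-π) π := by
    have h := (aux_window f hper hint t).comp_sub_left t
    rw [show t - (t - π) = π by ring, show t - (t + π) = -π by ring] at h
    exact h.symm
  have hh : IntervalIntegrable (fun τ => f (t - τ) - f t) volume (-π) π :=
    hfc.sub intervalIntegrable_const
  -- integrability of G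
  have hG : IntervalIntegrable G volume (-π) π := by
    have hbound : IntervalIntegrable
        (fun τ => (π/2) * (‖f (t - τ) - f t‖ / |τ|)) volume (-π) π :=
      hDini.const_mul _
    refine hbound.mono_fun ?_ ?_
    · have hden : Measurable (fun τ : ℝ => (Complex.exp ((τ:ℂ) * Complex.I) - 1)⁻¹) := by
        apply Measurable.inv
        apply Continuous.measurable
        apply Continuous.sub _ continuous_const
        apply Complex.continuous_exp.comp
        fun_prop
      have hhm : AEStronglyMeasurable (fun τ => f (t - τ) - f t)
          (volume.restrict (Set.uIoc (-π) π)) := by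
        rw [Set.uIoc_of_le hππ]
        exact hh.aestronglyMeasurable
      have := hhm.mul hden.aestronglyMeasurable
      simp only [hG_def, div_eq_mul_inv]
      exact this
    · have h0 : ∀ᵐ τ : ℝ ∂(volume.restrict (Set.uIoc (-π) π)), τ ≠ 0 := by
        refine ae_restrict_of_ae ?_
        simp [ae_iff, Real.volume_singleton]
      have hmem : ∀ᵐ τ : ℝ ∂(volume.restrict (Set.uIoc (-π) π)), τ ∈ Set.uIoc (-π) π :=
        ae_restrict_mem measurableSet_uIoc
      filter_upwards [h0, hmem] with τ hτ0 hτmem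
      have hτabs : |τ| ≤ π := by
        rw [Set.uIoc_of_le hππ] at hτmem
        rw [abs_le]
        exact ⟨le_of_lt hτmem.1, hτmem.2⟩
      have hlow := aux_lower τ hτabs
      have hpos : 0 < 2 / π * |τ| := by
        have := abs_pos.mpr hτ0
        positivity
      simp only [hG_def, norm_div]
      calc ‖f (t - τ) - f t‖ / ‖Complex.exp ((τ:ℂ) * Complex.I) - 1‖
          ≤ ‖f (t - τ) - f t‖ / (2 / π * |τ|) :=
            div_le_div_of_nonneg_left (by positivity) hpos hlow
        _ = (π/2) * (‖f (t - τ) - f t‖ / |τ|) := by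
            field_simp
        _ ≤ ‖(π/2) * (‖f (t - τ) - f t‖ / |τ|)‖ := le_abs_self _
  -- key identity for each n
  have key : ∀ n : ℕ,
      (∑ j ∈ Finset.Icc (-(n : ℤ)) (n : ℤ),
        fourierCoeffT f j * Complex.exp ((j : ℂ) * Complex.I * (t : ℂ)))
      = f t + (1 / (2 * π)) •
          ((∫ τ in (-π)..π, G τ * Complex.exp (((((n:ℝ)+1) * τ : ℝ) : ℂ) * Complex.I))
           - ∫ τ in (-π)..π, G τ * Complex.exp (((-(n:ℝ) * τ : ℝ) : ℂ) * Complex.I)) := by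
    intro n
    -- step 1
    have step1 : (∑ j ∈ Finset.Icc (-(n : ℤ)) (n : ℤ),
          fourierCoeffT f j * Complex.exp ((j : ℂ) * Complex.I * (t : ℂ)))
        = (1 / (2 * π)) • ∫ s in (-π)..π, f s * auxD n (t - s) := by
      have hterm : ∀ j : ℤ, fourierCoeffT f j * Complex.exp ((j : ℂ) * Complex.I * (t : ℂ))
          = (1 / (2 * π)) • ∫ s in (-π)..π,
              f s * Complex.exp ((j:ℂ) * Complex.I * ((t - s : ℝ) : ℂ)) := by
        intro j
        unfold fourierCoeffT
        rw [smul_mul_assoc, ← intervalIntegral.integral_mul_const]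
        congr 1
        refine intervalIntegral.integral_congr fun s _ => ?_
        rw [mul_assoc, ← Complex.exp_add]
        congr 2
        push_cast
        ring
      simp_rw [hterm]
      rw [← Finset.smul_sum]
      congr 1
      rw [← intervalIntegral.integral_finset_sum]
      · refine intervalIntegral.integral_congr fun s _ => ?_
        rw [auxD, Finset.mul_sum]
      · intro j _
        exact hint.mul_continuousOn (Continuous.continuousOn (by
          apply Complex.continuous_exp.comp; fun_prop))
    -- step 2
    have step2 : (∫ s in (-π)..π, f s * auxD n (t - s))
        = ∫ τ in (-π)..π, f (t - τ) * auxD n τ := by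
      have h1 : (∫ s in (-π)..π, f s * auxD n (t - s))
          = ∫ s in (-π)..π, (fun u => f (t - u) * auxD n u) (t - s) := by
        refine intervalIntegral.integral_congr fun s _ => ?_
        simp [sub_sub_cancel]
      rw [h1, intervalIntegral.integral_comp_sub_left (fun u => f (t - u) * auxD n u) t]
      have hFper : Function.Periodic (fun u => f (t - u) * auxD n u) (2*π) := by
        intro x
        simp only
        rw [show t - (x + 2*π) = (t - x) - 2*π by ring, hper.sub_eq, auxD_periodic n x]
      have h2 := hFper.intervalIntegral_add_eq (t - π) (-π)
      rw [show t - π + 2*π = t - -π by ring, show -π + 2*π = π by ring] at h2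
      exact h2
    -- step 3: split off f t
    have step3 : (∫ τ in (-π)..π, f (t - τ) * auxD n τ)
        = (∫ τ in (-π)..π, (f (t - τ) - f t) * auxD n τ) + f t * ((2*π:ℝ):ℂ) := by
      have hcongr : ∀ τ ∈ Set.uIcc (-π) π, f (t - τ) * auxD n τ
          = (f (t - τ) - f t) * auxD n τ + f t * auxD n τ := fun τ _ => by ring
      rw [intervalIntegral.integral_congr hcongr,
        intervalIntegral.integral_add
          (hh.mul_continuousOn (auxD_cont n).continuousOn)
          (show IntervalIntegrable (fun τ => f t * auxD n τ) volume (-π) π from (continuous_const.mul (auxD_cont n)).intervalIntegrable _ _),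
        intervalIntegral.integral_const_mul, auxD_integral]
    -- step 4: rewrite via G and split
    have step4 : (∫ τ in (-π)..π, (f (t - τ) - f t) * auxD n τ)
        = (∫ τ in (-π)..π, G τ * Complex.exp (((((n:ℝ)+1) * τ : ℝ) : ℂ) * Complex.I))
          - ∫ τ in (-π)..π, G τ * Complex.exp (((-(n:ℝ) * τ : ℝ) : ℂ) * Complex.I) := by
      have h0 : ∀ᵐ τ : ℝ, τ ∈ Set.uIoc (-π) π →
          (f (t - τ) - f t) * auxD n τ
          = G τ * Complex.exp (((((n:ℝ)+1) * τ : ℝ) : ℂ) * Complex.I)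
            - G τ * Complex.exp (((-(n:ℝ) * τ : ℝ) : ℂ) * Complex.I) := by
        have hne : ∀ᵐ τ : ℝ, τ ≠ 0 := by
          simp [ae_iff, Real.volume_singleton]
        filter_upwards [hne] with τ hτ0 hτmem
        have hτabs : |τ| ≤ π := by
          rw [Set.uIoc_of_le hππ] at hτmem
          rw [abs_le]
          exact ⟨le_of_lt hτmem.1, hτmem.2⟩
        exact aux_pointwise f t n τ hτ0 hτabs
      rw [intervalIntegral.integral_congr_ae h0]
      exact intervalIntegral.integral_sub
        (hG.mul_continuousOn (Continuous.continuousOn (by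
          apply Complex.continuous_exp.comp; fun_prop)))
        (hG.mul_continuousOn (Continuous.continuousOn (by
          apply Complex.continuous_exp.comp; fun_prop)))
    rw [step1, step2, step3, step4, smul_add]
    rw [add_comm]
    congr 1
    rw [Complex.real_smul]
    have : ((2*π:ℝ):ℂ) ≠ 0 := by
      simp [Complex.ofReal_ne_zero]
    push_cast at this ⊢
    field_simp
  rw [show (fun n : ℕ => ∑ j ∈ Finset.Icc (-(n : ℤ)) (n : ℤ),
      fourierCoeffT f j * Complex.exp ((j : ℂ) * Complex.I * (t : ℂ)))
    = fun n : ℕ => f t + (1 / (2 * π)) •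
        ((∫ τ in (-π)..π, G τ * Complex.exp (((((n:ℝ)+1) * τ : ℝ) : ℂ) * Complex.I))
         - ∫ τ in (-π)..π, G τ * Complex.exp (((-(n:ℝ) * τ : ℝ) : ℂ) * Complex.I))
    from funext key]
  have h2π : (0:ℝ) < 2*π := by linarith
  have hA : Tendsto (fun n : ℕ =>
      ∫ τ in (-π)..π, G τ * Complex.exp (((((n:ℝ)+1) * τ : ℝ) : ℂ) * Complex.I))
      atTop (nhds 0) := by
    refine aux_RL G hG (fun n => (n:ℝ)+1) ?_
    have h1 : Tendsto (fun n : ℕ => ((n:ℝ)+1)) atTop atTop :=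
      tendsto_atTop_add_const_right _ 1 tendsto_natCast_atTop_atTop
    have h2 : Tendsto (fun n : ℕ => ((n:ℝ)+1)/(2*π)) atTop atTop :=
      h1.atTop_div_const h2π
    have h3 : Tendsto (fun n : ℕ => -(((n:ℝ)+1)/(2*π))) atTop atBot :=
      tendsto_neg_atBot_iff.mpr h2
    refine (h3.congr (fun n => by ring)).mono_right ?_
    rw [cocompact_eq_atBot_atTop]
    exact le_sup_left
  have hB : Tendsto (fun n : ℕ =>
      ∫ τ in (-π)..π, G τ * Complex.exp (((-(n:ℝ) * τ : ℝ) : ℂ) * Complex.I))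
      atTop (nhds 0) := by
    refine aux_RL G hG (fun n => -(n:ℝ)) ?_
    have h2 : Tendsto (fun n : ℕ => (n:ℝ)/(2*π)) atTop atTop :=
      tendsto_natCast_atTop_atTop.atTop_div_const h2π
    refine (h2.congr (fun n => by ring)).mono_right ?_
    rw [cocompact_eq_atBot_atTop]
    exact le_sup_right
  have hAB := (hA.sub hB).const_smul (1 / (2 * π) : ℝ)
  have := tendsto_const_nhds (x := f t) (f := atTop (α := ℕ)) |>.add hAB
  simpa using this
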